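/- Gaussian contour integral evaluation. Let η, η′ ∈ ℝ with η < η′, and let x, y ∈ ℝ. Then (1/(2πi)) ∫_{𝒞_{1/4}^{π/3}} exp( (z−η)³/3 − (z−η′)³/3 − x(z−η) + y(z−η′) ) dz = exp( (−(η−η′)⁴ + 6(x+y)(η−η′)² + 3(x−y)²) / (12(η−η′)) ) / √(4π(η′−η)). -/

import Mathlib

/-!
Gaussian contour integral evaluation: for `η < η'`,
`(1/(2πi)) ∫_{𝒞_{1/4}^{π/3}} exp((z-η)³/3 - (z-η')³/3 - x(z-η) + y(z-η')) dz
  = exp((-(η-η')⁴ + 6(x+y)(η-η')² + 3(x-y)²)/(12(η-η'))) / √(4π(η'-η))`.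
-/

noncomputable section

/-- The contour integral over the wedge contour `𝒞_a^φ` consisting of the two rays departing
from `a` with angles `±φ`, oriented from `a + ∞e^{-iφ}` to `a + ∞e^{iφ}`. -/
def contourIntegral (a φ : ℝ) (g : ℂ → ℂ) : ℂ :=
  ∫ t in Set.Ioi (0:ℝ),
    (g ((a:ℂ) + (t:ℂ) * Complex.exp (Complex.I * φ)) * Complex.exp (Complex.I * φ)
      - g ((a:ℂ) + (t:ℂ) * Complex.exp (-(Complex.I * φ))) * Complex.exp (-(Complex.I * φ)))

namespace GCIE
open Complex MeasureTheory Set Filter Real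

def Q (c b d : ℝ) (z : ℂ) : ℂ := (c:ℂ)*z^2 + (b:ℂ)*z + (d:ℂ)
def u (θ : ℝ) : ℂ := Complex.exp (Complex.I * θ)
def h (a c b d θ t : ℝ) : ℂ := Complex.exp (Q c b d (↑a + ↑t * u θ)) * u θ
def h' (a c b d θ t : ℝ) : ℂ := Complex.I * u θ *
  (Complex.exp (Q c b d (↑a + ↑t * u θ)) +
    ↑t * u θ * ((2*(c:ℂ)*(↑a + ↑t * u θ) + (b:ℂ)) * Complex.exp (Q c b d (↑a + ↑t * u θ))))
def A0 (a c b d : ℝ) : ℝ := c*a^2 + |b| * |a| + |d|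
def B0 (a c b : ℝ) : ℝ := 2*c*|a| + |b|
def al (c : ℝ) : ℝ := c*Real.cos (6/5)/2
def K (a c b d : ℝ) : ℝ :=
  (1+2*c*|a|+|b|+2*c) * Real.exp (A0 a c b d + (B0 a c b)^2/(2*(c*Real.cos (6/5))))
def boundF (a c b d t : ℝ) : ℝ :=
  K a c b d * Real.exp (-al c*t^2) + K a c b d * (t * Real.exp (-al c*t^2))
    + K a c b d * (t^2 * Real.exp (-al c*t^2))
def F (a c b d θ : ℝ) : ℂ := ∫ t in Ioi (0:ℝ), h a c b d θ t

/-! ### trigonometry -/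

lemma kappa_pos : 0 < Real.cos (6/5) := by
  apply Real.cos_pos_of_mem_Ioo
  constructor
  · linarith [Real.pi_gt_three]
  · linarith [Real.pi_gt_three]

lemma cos_two_le {θ : ℝ} (hθ : θ ∈ Icc (1:ℝ) (8/5)) :
    Real.cos (2*θ) ≤ -Real.cos (6/5) := by
  have hgt := Real.pi_gt_d6
  have hlt := Real.pi_lt_d2
  have h1 : |2*θ - π| ≤ 6/5 := by
    rw [abs_le]
    constructor <;> [linarith [hθ.1]; linarith [hθ.2]]
  have h2 : Real.cos (6/5) ≤ Real.cos |2*θ - π| :=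
    Real.cos_le_cos_of_nonneg_of_le_pi (abs_nonneg _) (by linarith) h1
  rw [Real.cos_abs, Real.cos_sub_pi] at h2
  linarith

lemma cos_two_pi_third : Real.cos (2*(π/3)) ≤ -Real.cos (6/5) := by
  have hgt := Real.pi_gt_d6
  have hlt := Real.pi_lt_d2
  have h0 : Real.cos (2*(π/3)) = -Real.cos (π/3) := by
    rw [show 2*(π/3) = π - π/3 by ring, Real.cos_pi_sub]
  have h2 : Real.cos (6/5) ≤ Real.cos (π/3) :=
    Real.cos_le_cos_of_nonneg_of_le_pi (by positivity) (by linarith) (by linarith)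
  linarith

lemma cos_two_pi_half : Real.cos (2*(π/2)) ≤ -Real.cos (6/5) := by
  have h0 : Real.cos (2*(π/2)) = -1 := by
    rw [show 2*(π/2) = π by ring, Real.cos_pi]
  have := Real.cos_le_one (6/5)
  linarith

lemma pi_third_mem : π/3 ∈ Icc (1:ℝ) (8/5) := by
  have hgt := Real.pi_gt_d6
  have hlt := Real.pi_lt_d2
  constructor <;> [linarith; linarith]

lemma pi_half_mem : π/2 ∈ Icc (1:ℝ) (8/5) := by
  have hgt := Real.pi_gt_d6
  have hlt := Real.pi_lt_d2
  constructor <;> [linarith; linarith]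

/-! ### algebra and norms -/

lemma z_eq (a t θ : ℝ) : (a:ℂ) + (t:ℂ) * u θ
    = ((a + t*Real.cos θ : ℝ):ℂ) + ((t*Real.sin θ : ℝ):ℂ)*Complex.I := by
  rw [u, mul_comm Complex.I (θ:ℂ), Complex.exp_mul_I]
  push_cast [← Complex.ofReal_cos, ← Complex.ofReal_sin]
  ring

lemma re_Q (c b d p q : ℝ) : (Q c b d ((p:ℂ) + (q:ℂ)*Complex.I)).re
    = c*(p^2 - q^2) + b*p + d := by
  simp [Q, Complex.add_re, Complex.mul_re, Complex.mul_im, pow_two]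

lemma reQ_le (a c b d : ℝ) (hc : 0 < c) {θ t : ℝ} (ht : 0 ≤ t)
    (hθ : Real.cos (2*θ) ≤ -Real.cos (6/5)) :
    (Q c b d ((a:ℂ) + (t:ℂ) * u θ)).re
      ≤ A0 a c b d + B0 a c b * t - (c*Real.cos (6/5))*t^2 := by
  rw [z_eq, re_Q, A0, B0]
  have hid : (a + t*Real.cos θ)^2 - (t*Real.sin θ)^2
      = a^2 + 2*a*t*Real.cos θ + t^2 * Real.cos (2*θ) := by
    rw [Real.cos_two_mul']; ring
  rw [hid]
  have hcos1 : |Real.cos θ| ≤ 1 := Real.abs_cos_le_one θ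
  have h1 : a * Real.cos θ ≤ |a| := by
    calc a * Real.cos θ ≤ |a * Real.cos θ| := le_abs_self _
    _ = |a| * |Real.cos θ| := abs_mul _ _
    _ ≤ |a| * 1 := mul_le_mul_of_nonneg_left hcos1 (abs_nonneg a)
    _ = |a| := mul_one _
  have h2 : b * (a + t*Real.cos θ) ≤ |b| * |a| + |b| * t := by
    calc b * (a + t*Real.cos θ) ≤ |b * (a + t*Real.cos θ)| := le_abs_self _
    _ = |b| * |a + t*Real.cos θ| := abs_mul _ _
    _ ≤ |b| * (|a| + t) := by
        apply mul_le_mul_of_nonneg_left _ (abs_nonneg b)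
        calc |a + t*Real.cos θ| ≤ |a| + |t*Real.cos θ| := abs_add_le _ _
        _ = |a| + |t| * |Real.cos θ| := by rw [abs_mul]
        _ ≤ |a| + t*1 := by
            rw [_root_.abs_of_nonneg ht]
            exact add_le_add le_rfl (mul_le_mul_of_nonneg_left hcos1 ht)
        _ = |a| + t := by ring
    _ = |b| * |a| + |b| * t := by ring
  have h3 : c*(t^2*Real.cos (2*θ)) ≤ -(c*Real.cos (6/5))*t^2 := by
    have := mul_le_mul_of_nonneg_left hθ (mul_nonneg hc.le (sq_nonneg t))
    nlinarith [this]
  have h4 : c*(2*a*t*Real.cos θ) ≤ 2*c*|a| * t := by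
    have := mul_le_mul_of_nonneg_left h1
      (mul_nonneg (mul_nonneg (by norm_num : (0:ℝ) ≤ 2) hc.le) ht)
    nlinarith [this]
  have h5 : d ≤ |d| := le_abs_self d
  nlinarith [h2, h3, h4, h5]

lemma norm_u (θ : ℝ) : ‖u θ‖ = 1 := by
  rw [u, mul_comm, Complex.norm_exp_ofReal_mul_I]

lemma norm_cexpQ (c b d : ℝ) (z : ℂ) :
    ‖Complex.exp (Q c b d z)‖ = Real.exp ((Q c b d z).re) := by
  rw [Complex.norm_exp]

lemma norm_z_le (a t θ : ℝ) (ht : 0 ≤ t) : ‖(a:ℂ) + (t:ℂ) * u θ‖ ≤ |a| + t := by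
  calc ‖(a:ℂ) + (t:ℂ) * u θ‖ ≤ ‖(a:ℂ)‖ + ‖(t:ℂ) * u θ‖ := norm_add_le _ _
  _ = |a| + |t| * 1 := by
      rw [norm_mul, Complex.norm_real, Complex.norm_real, norm_u]
      simp [Real.norm_eq_abs]
  _ = |a| + t := by rw [_root_.abs_of_nonneg ht, mul_one]

lemma norm_h_eq (a c b d θ t : ℝ) :
    ‖h a c b d θ t‖ = Real.exp ((Q c b d (↑a + ↑t * u θ)).re) := by
  rw [h, norm_mul, norm_u, norm_cexpQ, mul_one]

lemma norm_h'_le (a c b d : ℝ) (hc : 0 ≤ c) (θ : ℝ) {t : ℝ} (ht : 0 ≤ t) :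
    ‖h' a c b d θ t‖ ≤ (1 + t*(2*c*(|a|+t)+|b|)) * Real.exp ((Q c b d (↑a + ↑t * u θ)).re) := by
  set z := (a:ℂ) + (t:ℂ) * u θ with hz
  have hW : ‖2*(c:ℂ)*z + (b:ℂ)‖ ≤ 2*c*(|a|+t) + |b| := by
    calc ‖2*(c:ℂ)*z + (b:ℂ)‖ ≤ ‖2*(c:ℂ)*z‖ + ‖(b:ℂ)‖ := norm_add_le _ _
    _ = (2*c) * ‖z‖ + |b| := by
        rw [show (2:ℂ)*(c:ℂ)*z = ((2*c:ℝ):ℂ)*z by push_cast; ring, norm_mul,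
          Complex.norm_real, Real.norm_eq_abs,
          _root_.abs_of_nonneg (by linarith : (0:ℝ) ≤ 2*c),
          Complex.norm_real, Real.norm_eq_abs]
    _ ≤ (2*c) * (|a|+t) + |b| := by
        have := norm_z_le a t θ ht
        have h2 : (0:ℝ) ≤ 2*c := by linarith
        nlinarith [mul_le_mul_of_nonneg_left this h2]
  calc ‖h' a c b d θ t‖
      = ‖Complex.I‖ * ‖u θ‖ * ‖Complex.exp (Q c b d z) +
          ↑t * u θ * ((2*(c:ℂ)*z + (b:ℂ)) * Complex.exp (Q c b d z))‖ := by
        rw [h', norm_mul, norm_mul]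
    _ = ‖Complex.exp (Q c b d z) +
          ↑t * u θ * ((2*(c:ℂ)*z + (b:ℂ)) * Complex.exp (Q c b d z))‖ := by
        rw [Complex.norm_I, norm_u, one_mul, one_mul]
    _ ≤ ‖Complex.exp (Q c b d z)‖ +
          ‖(t:ℂ)‖ * ‖u θ‖ * (‖2*(c:ℂ)*z + (b:ℂ)‖ * ‖Complex.exp (Q c b d z)‖) := by
        refine (norm_add_le _ _).trans ?_
        rw [norm_mul, norm_mul, norm_mul]
    _ ≤ Real.exp ((Q c b d z).re) +
          t * ((2*c*(|a|+t)+|b|) * Real.exp ((Q c b d z).re)) := by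
        rw [norm_cexpQ, norm_u, Complex.norm_real, Real.norm_eq_abs, _root_.abs_of_nonneg ht,
          mul_one]
        have hE : (0:ℝ) ≤ Real.exp ((Q c b d z).re) := (Real.exp_pos _).le
        have : ‖2*(c:ℂ)*z + (b:ℂ)‖ * Real.exp ((Q c b d z).re)
            ≤ (2*c*(|a|+t)+|b|) * Real.exp ((Q c b d z).re) :=
          mul_le_mul_of_nonneg_right hW hE
        nlinarith [mul_le_mul_of_nonneg_left this ht]
    _ = (1 + t*(2*c*(|a|+t)+|b|)) * Real.exp ((Q c b d z).re) := by ring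

/-! ### exponential domination -/

lemma exp_chain (a c b d : ℝ) (hc : 0 < c) (t : ℝ) :
    Real.exp (A0 a c b d + B0 a c b * t - (c*Real.cos (6/5))*t^2)
      ≤ Real.exp (A0 a c b d + (B0 a c b)^2/(2*(c*Real.cos (6/5)))) * Real.exp (-al c*t^2) := by
  rw [← Real.exp_add]
  apply Real.exp_le_exp.2
  have hck : 0 < c*Real.cos (6/5) := mul_pos hc kappa_pos
  rw [al]
  have key : B0 a c b * t ≤ (B0 a c b)^2/(2*(c*Real.cos (6/5))) + (c*Real.cos (6/5))/2*t^2 := by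
    have h0 := sq_nonneg (B0 a c b - (c*Real.cos (6/5))*t)
    have hD : (B0 a c b)^2 = ((B0 a c b)^2/(2*(c*Real.cos (6/5))))*(2*(c*Real.cos (6/5))) :=
      (div_mul_cancel₀ _ (by positivity)).symm
    nlinarith [h0, hck, hD, mul_pos hck hck]
  nlinarith [key]

lemma norm_h_le (a c b d : ℝ) (hc : 0 < c) {θ t : ℝ} (ht : 0 ≤ t)
    (hθ : Real.cos (2*θ) ≤ -Real.cos (6/5)) :
    ‖h a c b d θ t‖ ≤ K a c b d * Real.exp (-al c*t^2) := by
  rw [norm_h_eq]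
  have h1 : Real.exp ((Q c b d (↑a + ↑t * u θ)).re)
      ≤ Real.exp (A0 a c b d + B0 a c b * t - (c*Real.cos (6/5))*t^2) :=
    Real.exp_le_exp.2 (reQ_le a c b d hc ht hθ)
  refine h1.trans ((exp_chain a c b d hc t).trans ?_)
  rw [K]
  have hE : (0:ℝ) ≤ Real.exp (A0 a c b d + (B0 a c b)^2/(2*(c*Real.cos (6/5)))) :=
    (Real.exp_pos _).le
  have hE2 : (0:ℝ) ≤ Real.exp (-al c*t^2) := (Real.exp_pos _).le
  have hone : (1:ℝ) ≤ 1+2*c*|a|+|b|+2*c := by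
    nlinarith [abs_nonneg a, abs_nonneg b, hc.le, mul_nonneg hc.le (abs_nonneg a)]
  nlinarith [mul_nonneg hE hE2]

lemma norm_h'_le_bound (a c b d : ℝ) (hc : 0 < c) {θ t : ℝ} (ht : 0 ≤ t)
    (hθ : Real.cos (2*θ) ≤ -Real.cos (6/5)) :
    ‖h' a c b d θ t‖ ≤ boundF a c b d t := by
  have step1 := norm_h'_le a c b d hc.le θ ht
  have step2 : Real.exp ((Q c b d (↑a + ↑t * u θ)).re)
      ≤ Real.exp (A0 a c b d + (B0 a c b)^2/(2*(c*Real.cos (6/5)))) * Real.exp (-al c*t^2) :=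
    (Real.exp_le_exp.2 (reQ_le a c b d hc ht hθ)).trans (exp_chain a c b d hc t)
  have hpos : (0:ℝ) ≤ 1 + t*(2*c*(|a|+t)+|b|) := by
    nlinarith [mul_nonneg hc.le ht, abs_nonneg a, abs_nonneg b, sq_nonneg t,
      mul_nonneg (abs_nonneg b) ht, mul_nonneg (mul_nonneg hc.le ht) ht,
      mul_nonneg (mul_nonneg hc.le (abs_nonneg a)) ht]
  have step3 : ‖h' a c b d θ t‖
      ≤ (1 + t*(2*c*(|a|+t)+|b|)) *
        (Real.exp (A0 a c b d + (B0 a c b)^2/(2*(c*Real.cos (6/5)))) * Real.exp (-al c*t^2)) :=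
    step1.trans (mul_le_mul_of_nonneg_left step2 hpos)
  refine step3.trans ?_
  rw [boundF, K]
  have hcoef : (1 + t*(2*c*(|a|+t)+|b|)) ≤ (1+2*c*|a|+|b|+2*c)*(1+t+t^2) := by
    nlinarith [mul_nonneg hc.le ht, abs_nonneg a, abs_nonneg b, sq_nonneg t, ht,
      mul_nonneg (abs_nonneg b) ht, mul_nonneg (mul_nonneg hc.le ht) ht,
      mul_nonneg (mul_nonneg hc.le (abs_nonneg a)) ht,
      mul_nonneg (mul_nonneg (mul_nonneg hc.le (abs_nonneg a)) ht) ht,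
      mul_nonneg (mul_nonneg (abs_nonneg b) ht) ht]
  have hEE : (0:ℝ) ≤ Real.exp (A0 a c b d + (B0 a c b)^2/(2*(c*Real.cos (6/5))))
      * Real.exp (-al c*t^2) := mul_nonneg (Real.exp_pos _).le (Real.exp_pos _).le
  nlinarith [mul_le_mul_of_nonneg_right hcoef hEE]

/-! ### derivatives -/

lemma hasDerivAt_cexpQ (c b d : ℝ) (z : ℂ) :
    HasDerivAt (fun z => Complex.exp (Q c b d z))
      ((2*(c:ℂ)*z + b) * Complex.exp (Q c b d z)) z := by
  have h1 : HasDerivAt (Q c b d) (2*(c:ℂ)*z + b) z := by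
    have := (((hasDerivAt_pow 2 z).const_mul (c:ℂ)).add
      ((hasDerivAt_id z).const_mul (b:ℂ))).add_const (d:ℂ)
    refine this.congr_deriv ?_
    push_cast
    ring
  simpa [mul_comm] using h1.cexp

lemma hasDerivAt_h_theta (a c b d θ t : ℝ) :
    HasDerivAt (fun θ => h a c b d θ t) (h' a c b d θ t) θ := by
  have hu : ∀ w : ℂ, HasDerivAt (fun w => Complex.exp (Complex.I * w))
      (Complex.exp (Complex.I * w) * Complex.I) w := fun w => by
    simpa using ((hasDerivAt_id w).const_mul Complex.I).cexp
  have hz : HasDerivAt (fun w : ℂ => (a:ℂ) + ↑t * Complex.exp (Complex.I * w))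
      (↑t * (Complex.exp (Complex.I * (θ:ℂ)) * Complex.I)) (θ:ℂ) :=
    ((hu θ).const_mul (t:ℂ)).const_add (a:ℂ)
  have h1 := (hasDerivAt_cexpQ c b d ((a:ℂ) + ↑t * Complex.exp (Complex.I * (θ:ℂ)))).comp
    (θ:ℂ) hz
  have h2 := h1.mul (hu (θ:ℂ))
  have h3 := h2.comp_ofReal
  convert h3 using 1
  · funext y; rfl
  · simp only [h', h, u, Function.comp_def, id_eq]
    ring

lemma hasDerivAt_h_t (a c b d θ t : ℝ) :
    HasDerivAt (fun t : ℝ => Complex.I * u θ * (↑t * Complex.exp (Q c b d (↑a + ↑t * u θ))))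
      (h' a c b d θ t) t := by
  have hz : ∀ w : ℂ, HasDerivAt (fun w : ℂ => (a:ℂ) + w * u θ) (u θ) w := fun w => by
    simpa using ((hasDerivAt_id w).mul_const (u θ)).const_add (a:ℂ)
  have h1 := (hasDerivAt_cexpQ c b d ((a:ℂ) + (t:ℂ) * u θ)).comp (t:ℂ) (hz (t:ℂ))
  have h2 := (hasDerivAt_id (t:ℂ)).mul h1
  have h3 := (h2.const_mul (Complex.I * u θ)).comp_ofReal
  convert h3 using 1
  · funext y; rfl
  simp only [h', Function.comp_def, id_eq]
  ring

/-! ### integrability -/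

lemma continuous_h (a c b d θ : ℝ) : Continuous (fun t => h a c b d θ t) := by
  unfold h Q u
  fun_prop

lemma continuous_h' (a c b d θ : ℝ) : Continuous (fun t => h' a c b d θ t) := by
  unfold h' Q u
  fun_prop

lemma al_pos {c : ℝ} (hc : 0 < c) : 0 < al c := by
  rw [al]
  have := kappa_pos
  positivity

lemma integrableOn_h (a c b d : ℝ) (hc : 0 < c) {θ : ℝ}
    (hθ : Real.cos (2*θ) ≤ -Real.cos (6/5)) :
    IntegrableOn (fun t => h a c b d θ t) (Ioi (0:ℝ)) := by
  have hg : IntegrableOn (fun t => K a c b d * Real.exp (-al c*t^2)) (Ioi (0:ℝ)) :=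
    ((integrable_exp_neg_mul_sq (al_pos hc)).const_mul (K a c b d)).integrableOn
  refine hg.integrable.mono' (continuous_h a c b d θ).aestronglyMeasurable.restrict ?_
  rw [ae_restrict_iff' measurableSet_Ioi]
  exact Eventually.of_forall fun t ht => norm_h_le a c b d hc (le_of_lt ht) hθ

lemma integrableOn_boundF (a c b d : ℝ) (hc : 0 < c) :
    IntegrableOn (boundF a c b d) (Ioi (0:ℝ)) := by
  have hα := al_pos hc
  have i0 : IntegrableOn (fun t => Real.exp (-al c*t^2)) (Ioi (0:ℝ)) :=
    (integrable_exp_neg_mul_sq hα).integrableOn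
  have i1 : IntegrableOn (fun t => t * Real.exp (-al c*t^2)) (Ioi (0:ℝ)) :=
    (integrable_mul_exp_neg_mul_sq hα).integrableOn
  have i2 : IntegrableOn (fun t => t^2 * Real.exp (-al c*t^2)) (Ioi (0:ℝ)) := by
    have h2 := (integrable_rpow_mul_exp_neg_mul_sq hα
      (by norm_num : (-1:ℝ) < 2)).integrableOn (s := Ioi (0:ℝ))
    apply h2.congr_fun _ measurableSet_Ioi
    intro t _
    show t ^ ((2:ℝ)) * _ = _
    rw [show ((2:ℝ)) = ((2:ℕ):ℝ) by norm_num, Real.rpow_natCast]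
  exact ((i0.const_mul _).add (i1.const_mul _)).add (i2.const_mul _)

/-! ### the rotation argument -/

lemma F_deriv_zero (a c b d : ℝ) (hc : 0 < c) {θ₀ : ℝ} (hθ₀ : θ₀ ∈ Ioo (1:ℝ) (8/5)) :
    HasDerivAt (F a c b d) 0 θ₀ := by
  obtain ⟨h1, h2⟩ := hθ₀
  set ε := min (θ₀ - 1) (8/5 - θ₀) with hε
  have hεpos : 0 < ε := lt_min (by linarith) (by linarith)
  have hball : ∀ x ∈ Metric.ball θ₀ ε, x ∈ Icc (1:ℝ) (8/5) := by
    intro x hx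
    rw [Metric.mem_ball, Real.dist_eq, abs_lt] at hx
    constructor
    · have := min_le_left (θ₀ - 1) (8/5 - θ₀); linarith [hx.1]
    · have := min_le_right (θ₀ - 1) (8/5 - θ₀); linarith [hx.2]
  have hθ₀mem : θ₀ ∈ Icc (1:ℝ) (8/5) := ⟨h1.le, h2.le⟩
  have main := hasDerivAt_integral_of_dominated_loc_of_deriv_le
    (μ := volume.restrict (Ioi (0:ℝ))) (x₀ := θ₀)
    (F := fun θ t => h a c b d θ t) (F' := fun θ t => h' a c b d θ t)
    (bound := boundF a c b d) (Metric.ball_mem_nhds θ₀ hεpos)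
    (Eventually.of_forall fun θ => (continuous_h a c b d θ).aestronglyMeasurable.restrict)
    (integrableOn_h a c b d hc (cos_two_le hθ₀mem))
    ((continuous_h' a c b d θ₀).aestronglyMeasurable.restrict)
    ?_ (integrableOn_boundF a c b d hc) ?_
  · obtain ⟨hint, hderiv⟩ := main
    have hzero : (∫ t in Ioi (0:ℝ), h' a c b d θ₀ t) = 0 := by
      have := integral_Ioi_of_hasDerivAt_of_tendsto
        (f := fun t : ℝ => Complex.I * u θ₀ *
          (↑t * Complex.exp (Q c b d (↑a + ↑t * u θ₀))))
        (f' := fun t => h' a c b d θ₀ t) (a := 0) (m := 0)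
        ?_ (fun t _ => hasDerivAt_h_t a c b d θ₀ t) hint ?_
      · simpa using this
      · exact ((hasDerivAt_h_t a c b d θ₀ 0).continuousAt).continuousWithinAt
      · -- tendsto 0
        apply squeeze_zero_norm' (a := fun t : ℝ =>
          t * (K a c b d * Real.exp (-al c*t^2)))
        · filter_upwards [eventually_ge_atTop (0:ℝ)] with t ht
          have hnorm : ‖Complex.I * u θ₀ * (↑t * Complex.exp (Q c b d (↑a + ↑t * u θ₀)))‖
              = t * ‖h a c b d θ₀ t‖ := by
            simp only [h, norm_mul, Complex.norm_I, norm_u, Complex.norm_real,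
              Real.norm_eq_abs, _root_.abs_of_nonneg ht, one_mul, mul_one]
          rw [hnorm]
          exact mul_le_mul_of_nonneg_left
            (norm_h_le a c b d hc ht (cos_two_le hθ₀mem)) ht
        · -- t * (K * exp(-α t²)) → 0
          have hα := al_pos hc
          have hlittle := rpow_mul_exp_neg_mul_sq_isLittleO_exp_neg hα 1
          have htend : Tendsto (fun t : ℝ => Real.exp (-(1/2) * t)) atTop (nhds 0) := by
            have := Real.tendsto_exp_neg_atTop_nhds_zero.comp
              (tendsto_id.const_mul_atTop (by norm_num : (0:ℝ) < 1/2))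
            simpa [Function.comp_def, neg_mul] using this
          have h0 : Tendsto (fun t : ℝ => t ^ (1:ℝ) * Real.exp (-al c * t^2)) atTop (nhds 0) :=
            hlittle.trans_tendsto htend
          have h0' : Tendsto (fun t : ℝ => K a c b d * (t ^ (1:ℝ) * Real.exp (-al c * t^2)))
              atTop (nhds 0) := by
            simpa using h0.const_mul (K a c b d)
          apply h0'.congr'
          filter_upwards [eventually_ge_atTop (0:ℝ)] with t ht
          rw [Real.rpow_one]
          ring
    rw [hzero] at hderiv
    exact hderiv
  · rw [ae_restrict_iff' measurableSet_Ioi]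
    refine Eventually.of_forall fun t ht θ hθ => ?_
    exact norm_h'_le_bound a c b d hc (le_of_lt ht) (cos_two_le (hball θ hθ))
  · refine Eventually.of_forall fun t θ _ => ?_
    exact hasDerivAt_h_theta a c b d θ t

lemma F_const (a c b d : ℝ) (hc : 0 < c) :
    F a c b d (π/2) = F a c b d (π/3) := by
  have hgt := Real.pi_gt_d6
  have hlt := Real.pi_lt_d2
  have hsub : Icc (π/3) (π/2) ⊆ Ioo (1:ℝ) (8/5) := by
    intro x hx
    exact ⟨by linarith [hx.1], by linarith [hx.2]⟩
  have hcont : ContinuousOn (F a c b d) (Icc (π/3) (π/2)) := fun x hx =>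
    ((F_deriv_zero a c b d hc (hsub hx)).continuousAt).continuousWithinAt
  have hderiv : ∀ x ∈ Ico (π/3) (π/2), HasDerivWithinAt (F a c b d) 0 (Ici x) x := by
    intro x hx
    exact (F_deriv_zero a c b d hc (hsub ⟨hx.1, hx.2.le⟩)).hasDerivWithinAt
  exact constant_of_has_deriv_right_zero hcont hderiv (π/2) ⟨by linarith, le_refl _⟩

/-! ### conjugation symmetry and evaluation -/

lemma conj_u (θ : ℝ) : Complex.exp (-(Complex.I*(θ:ℂ))) = starRingEnd ℂ (u θ) := by
  rw [u, ← Complex.exp_conj]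
  congr 1
  rw [map_mul, Complex.conj_I, Complex.conj_ofReal]
  ring

lemma conj_Q (c b d : ℝ) (z : ℂ) :
    Q c b d (starRingEnd ℂ z) = starRingEnd ℂ (Q c b d z) := by
  simp [Q, map_add, map_mul, map_pow, Complex.conj_ofReal]

lemma conj_h_eq (a c b d θ t : ℝ) :
    Complex.exp (Q c b d ((a:ℂ) + (t:ℂ) * Complex.exp (-(Complex.I*(θ:ℂ)))))
        * Complex.exp (-(Complex.I*(θ:ℂ)))
      = starRingEnd ℂ (h a c b d θ t) := by
  rw [conj_u, h, map_mul, ← Complex.exp_conj, ← conj_Q]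
  congr 2
  rw [map_add, map_mul, Complex.conj_ofReal, Complex.conj_ofReal]

lemma integrableOn_conj_h (a c b d : ℝ) (hc : 0 < c) {θ : ℝ}
    (hθ : Real.cos (2*θ) ≤ -Real.cos (6/5)) :
    IntegrableOn (fun t => starRingEnd ℂ (h a c b d θ t)) (Ioi (0:ℝ)) := by
  have hint := integrableOn_h a c b d hc hθ
  refine hint.norm.mono'
    (Complex.continuous_conj.comp (continuous_h a c b d θ)).aestronglyMeasurable.restrict ?_
  refine Eventually.of_forall fun t => ?_
  simp

lemma contour_eq (a c b d : ℝ) (hc : 0 < c) :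
    contourIntegral a (π/3) (fun z => Complex.exp (Q c b d z))
      = F a c b d (π/2) - starRingEnd ℂ (F a c b d (π/2)) := by
  have hint3 := integrableOn_h a c b d hc cos_two_pi_third
  have hstep : contourIntegral a (π/3) (fun z => Complex.exp (Q c b d z))
      = ∫ t in Ioi (0:ℝ), (h a c b d (π/3) t - starRingEnd ℂ (h a c b d (π/3) t)) := by
    simp only [contourIntegral]
    refine MeasureTheory.setIntegral_congr_fun measurableSet_Ioi fun t _ => ?_
    rw [conj_h_eq, h, u]
  rw [hstep, integral_sub hint3 (integrableOn_conj_h a c b d hc cos_two_pi_third),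
    integral_conj]
  have hF := F_const a c b d hc
  rw [show (∫ t in Ioi (0:ℝ), h a c b d (π/3) t) = F a c b d (π/3) from rfl, hF]

lemma u_pi_half : u (π/2) = Complex.I := by
  rw [u, mul_comm, Complex.exp_mul_I, ← Complex.ofReal_cos, ← Complex.ofReal_sin,
    Real.cos_pi_div_two, Real.sin_pi_div_two]
  simp

lemma Q_vertical (a c b d : ℝ) (s : ℝ) :
    Q c b d ((a:ℂ) + (s:ℂ)*Complex.I)
      = (-(c:ℂ))*(s:ℂ)^2 + (((2*a*c+b:ℝ):ℂ)*Complex.I)*(s:ℂ) + ((c*a^2+a*b+d:ℝ):ℂ) := by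
  rw [Q]
  push_cast
  linear_combination ((c:ℂ)*(s:ℂ)^2)*Complex.I_sq

lemma integrable_vertical (a c b d : ℝ) (hc : 0 < c) :
    Integrable (fun s : ℝ => Complex.exp (Q c b d ((a:ℂ) + (s:ℂ)*Complex.I))) := by
  have heq : (fun s : ℝ => Complex.exp (Q c b d ((a:ℂ) + (s:ℂ)*Complex.I)))
      = fun s : ℝ => Complex.exp ((-(c:ℂ))*(s:ℂ)^2 + (((2*a*c+b:ℝ):ℂ)*Complex.I)*(s:ℂ)
          + ((c*a^2+a*b+d:ℝ):ℂ)) := by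
    funext s
    rw [Q_vertical]
  rw [heq]
  apply integrable_cexp_quadratic'
  simpa using hc

lemma integral_vertical (a c b d : ℝ) (hc : 0 < c) :
    (∫ s : ℝ, Complex.exp (Q c b d ((a:ℂ) + (s:ℂ)*Complex.I)))
      = ((Real.sqrt (π/c) : ℝ):ℂ) * ((Real.exp (d - b^2/(4*c)) : ℝ):ℂ) := by
  have heq : ∀ s : ℝ, Complex.exp (Q c b d ((a:ℂ) + (s:ℂ)*Complex.I))
      = Complex.exp ((-(c:ℂ))*(s:ℂ)^2 + (((2*a*c+b:ℝ):ℂ)*Complex.I)*(s:ℂ)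
          + ((c*a^2+a*b+d:ℝ):ℂ)) := fun s => by rw [Q_vertical]
  simp_rw [heq]
  rw [integral_cexp_quadratic (by simpa using hc) _ _]
  congr 1
  · -- (π / -(-c))^(1/2) = √(π/c)
    rw [neg_neg]
    rw [show ((π:ℂ) / (c:ℂ)) = (((π/c : ℝ)):ℂ) by push_cast; ring]
    rw [show ((1/2 : ℂ)) = (((1/2:ℝ)):ℂ) by norm_num]
    rw [← Complex.ofReal_cpow (by positivity) (1/2)]
    rw [Real.sqrt_eq_rpow]
  · -- exponent
    rw [Complex.ofReal_exp]
    congr 1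
    have hc2 : ((((2*a*c+b:ℝ)):ℂ)*Complex.I)^2 = -((((2*a*c+b)^2:ℝ)):ℂ) := by
      rw [mul_pow, Complex.I_sq]
      push_cast
      ring
    rw [hc2]
    have hcne : (c:ℂ) ≠ 0 := Complex.ofReal_ne_zero.mpr (ne_of_gt hc)
    push_cast
    field_simp
    ring

lemma key (a b d : ℝ) {c : ℝ} (hc : 0 < c) :
    contourIntegral a (π/3) (fun z => Complex.exp (Q c b d z))
      = Complex.I * (((Real.sqrt (π/c) : ℝ):ℂ) * ((Real.exp (d - b^2/(4*c)) : ℝ):ℂ)) := by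
  rw [contour_eq a c b d hc]
  -- F(π/2) = ∫_{Ioi 0} G t * I
  set G : ℝ → ℂ := fun s => Complex.exp (Q c b d ((a:ℂ) + (s:ℂ)*Complex.I)) with hG
  have hFhalf : F a c b d (π/2) = ∫ t in Ioi (0:ℝ), G t * Complex.I := by
    rw [F]
    congr 1
    funext t
    rw [h, u_pi_half, hG]
  have hconjh : ∀ t : ℝ, starRingEnd ℂ (h a c b d (π/2) t) = - (G (-t) * Complex.I) := by
    intro t
    rw [h, u_pi_half, map_mul, Complex.conj_I, ← Complex.exp_conj, ← conj_Q]
    have : starRingEnd ℂ ((a:ℂ) + (t:ℂ)*Complex.I) = (a:ℂ) + ((-t:ℝ):ℂ)*Complex.I := by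
      rw [map_add, map_mul, Complex.conj_ofReal, Complex.conj_ofReal, Complex.conj_I]
      push_cast
      ring
    rw [this, hG]
    ring
  have hconjF : starRingEnd ℂ (F a c b d (π/2)) = - ∫ t in Ioi (0:ℝ), G (-t) * Complex.I := by
    rw [F, ← integral_conj]
    rw [← integral_neg]
    congr 1
    funext t
    rw [hconjh t]
  rw [hconjF, hFhalf, sub_neg_eq_add]
  have hGfull : Integrable (fun s : ℝ => G s * Complex.I) :=
    (integrable_vertical a c b d hc).mul_const Complex.I
  have hneg : (∫ t in Ioi (0:ℝ), G (-t) * Complex.I)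
      = ∫ t in Iic (0:ℝ), G t * Complex.I := by
    have := integral_comp_neg_Ioi (0:ℝ) (fun s => G s * Complex.I)
    simpa using this
  rw [hneg, add_comm, intervalIntegral.integral_Iic_add_Ioi
    hGfull.integrableOn hGfull.integrableOn]
  rw [MeasureTheory.integral_mul_const, hG]
  rw [integral_vertical a c b d hc]
  ring

lemma Idiv (w : ℂ) : (1 / (2 * (Real.pi : ℂ) * Complex.I)) * (Complex.I * w)
    = w / (2*(Real.pi:ℂ)) := by
  rw [show (2 * (Real.pi:ℂ) * Complex.I) = Complex.I * (2*(Real.pi:ℂ)) from by ring]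
  calc (1 / (Complex.I * (2*(Real.pi:ℂ)))) * (Complex.I * w)
      = (Complex.I * w) / (Complex.I * (2*(Real.pi:ℂ))) := by
        rw [div_mul_eq_mul_div, one_mul]
    _ = w / (2*(Real.pi:ℂ)) := mul_div_mul_left _ _ Complex.I_ne_zero

end GCIE


/-- **Gaussian contour integral evaluation.** -/
theorem gaussian_contour_integral_evaluation (η η' x y : ℝ) (hη : η < η') :
    (1 / (2 * (Real.pi : ℂ) * Complex.I)) *
      contourIntegral (1/4) (Real.pi/3) (fun z =>
        Complex.exp ((z - (η:ℂ))^3/3 - (z - (η':ℂ))^3/3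
          - (x:ℂ)*(z - (η:ℂ)) + (y:ℂ)*(z - (η':ℂ))))
    = (Real.exp ((-(η-η')^4 + 6*(x+y)*(η-η')^2 + 3*(x-y)^2) / (12*(η-η'))) : ℂ)
        / (Real.sqrt (4*Real.pi*(η'-η)) : ℂ) := by
  set c := η' - η with hcdef
  have hc : 0 < c := sub_pos.2 hη
  set b := η^2 - η'^2 - x + y with hbdef
  set d := -(η^3 - η'^3)/3 + x*η - y*η' with hddef
  have hfun : (fun z => Complex.exp ((z - (η:ℂ))^3/3 - (z - (η':ℂ))^3/3
        - (x:ℂ)*(z - (η:ℂ)) + (y:ℂ)*(z - (η':ℂ))))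
      = fun z => Complex.exp (GCIE.Q c b d z) := by
    funext z
    rw [GCIE.Q, hcdef, hbdef, hddef]
    congr 1
    push_cast
    ring
  rw [hfun, GCIE.key (1/4) b d hc]
  have hrE : d - b^2/(4*c)
      = (-(η-η')^4 + 6*(x+y)*(η-η')^2 + 3*(x-y)^2) / (12*(η-η')) := by
    rw [hcdef, hbdef, hddef]
    have hne : η - η' ≠ 0 := sub_ne_zero.2 hη.ne
    have hne' : η' - η ≠ 0 := sub_ne_zero.2 hη.ne'
    field_simp
    ring
  rw [← hrE, GCIE.Idiv]
  have hgoal : Real.sqrt (Real.pi/c) * Real.exp (d - b^2/(4*c)) / (2*Real.pi)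
      = Real.exp (d - b^2/(4*c)) / Real.sqrt (4*Real.pi*c) := by
    have hsqrt : Real.sqrt (4*Real.pi*c) * Real.sqrt (Real.pi/c) = 2*Real.pi := by
      rw [← Real.sqrt_mul (by positivity)]
      rw [show 4*Real.pi*c * (Real.pi/c) = (2*Real.pi)^2 from by field_simp; ring]
      exact Real.sqrt_sq (by positivity)
    rw [div_eq_div_iff (by positivity) (by positivity)]
    linear_combination Real.exp (d - b^2/(4*c)) * hsqrt
  calc ((Real.sqrt (Real.pi/c) : ℝ):ℂ) * ((Real.exp (d - b^2/(4*c)) : ℝ):ℂ) / (2*(Real.pi:ℂ))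
      = ((Real.sqrt (Real.pi/c) * Real.exp (d - b^2/(4*c)) / (2*Real.pi) : ℝ):ℂ) := by
        push_cast
        ring
    _ = ((Real.exp (d - b^2/(4*c)) / Real.sqrt (4*Real.pi*c) : ℝ):ℂ) := by rw [hgoal]
    _ = (Real.exp (d - b^2/(4*c)) : ℂ) / (Real.sqrt (4*Real.pi*c) : ℂ) := by push_cast; ring


end
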